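/- Hardy–Littlewood inequality: for nonnegative measurable functions f and g on a finite measure space Ω, ∫_Ω f(x) g(x) dx ≤ ∫_0^{|Ω|} f*(s) g*(s) ds, where f* and g* denote the decreasing rearrangements of f and g. -/
import Mathlib

open MeasureTheory

/-- The distribution function `μ_h(t) = |{x : h x > t}|`. -/
noncomputable def distribFn {Ω : Type*} [MeasurableSpace Ω] (μ : Measure Ω)
    (h : Ω → ℝ) (t : ℝ) : ENNReal := μ {x | t < h x}

/-- The decreasing rearrangement `h*(s) = inf {t ≥ 0 : μ_h(t) < s}`. -/
noncomputable def decRearr {Ω : Type*} [MeasurableSpace Ω] (μ : Measure Ω)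
    (h : Ω → ℝ) (s : ℝ) : ℝ :=
  sInf {t : ℝ | 0 ≤ t ∧ distribFn μ h t < ENNReal.ofReal s}

section Aux

variable {Ω : Type*} [MeasurableSpace Ω] (μ : Measure Ω)

lemma distribFn_antitone (h : Ω → ℝ) : Antitone (distribFn μ h) :=
  fun t r htr => measure_mono (fun x hx => lt_of_le_of_lt htr hx)

lemma decRearr_nonneg (h : Ω → ℝ) (s : ℝ) : 0 ≤ decRearr μ h s :=
  Real.sInf_nonneg (fun _ ht => ht.1)

lemma decRearr_of_nonpos (h : Ω → ℝ) {s : ℝ} (hs : s ≤ 0) : decRearr μ h s = 0 := by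
  have : {t : ℝ | 0 ≤ t ∧ distribFn μ h t < ENNReal.ofReal s} = ∅ := by
    ext t
    simp only [Set.mem_setOf_eq, Set.mem_empty_iff_false, iff_false, not_and]
    intro _
    rw [ENNReal.ofReal_eq_zero.mpr hs]
    exact fun hc => (ENNReal.not_lt_zero hc)
  rw [decRearr, this, Real.sInf_empty]

lemma exists_mem_S [IsFiniteMeasure μ] {h : Ω → ℝ} (hm : Measurable h) {s : ℝ} (hs : 0 < s) :
    ∃ t : ℝ, 0 ≤ t ∧ distribFn μ h t < ENNReal.ofReal s := by
  have hinter : ⋂ n : ℕ, {x | (n : ℝ) < h x} = ∅ := by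
    ext x
    simp only [Set.mem_iInter, Set.mem_setOf_eq, Set.mem_empty_iff_false, iff_false, not_forall,
      not_lt]
    obtain ⟨n, hn⟩ := exists_nat_gt (h x)
    exact ⟨n, hn.le⟩
  have hten : Filter.Tendsto (μ ∘ fun n : ℕ => {x | (n : ℝ) < h x}) Filter.atTop (nhds 0) := by
    have := tendsto_measure_iInter_atTop (μ := μ)
      (s := fun n : ℕ => {x | (n : ℝ) < h x})
      (fun n => (hm measurableSet_Ioi).nullMeasurableSet)
      (fun a b hab => Set.setOf_subset_setOf.mpr fun x hx =>
        lt_of_le_of_lt (by exact_mod_cast hab) hx)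
      ⟨0, measure_ne_top μ _⟩
    rwa [hinter, measure_empty] at this
  have := hten.eventually_lt_const (ENNReal.ofReal_pos.mpr hs)
  obtain ⟨n, hn⟩ := this.exists
  exact ⟨n, Nat.cast_nonneg n, hn⟩

lemma lt_decRearr [IsFiniteMeasure μ] {h : Ω → ℝ} (hm : Measurable h) {s t₀ : ℝ}
    (hs : 0 < s) (hlt : ENNReal.ofReal s < distribFn μ h t₀) : t₀ < decRearr μ h s := by
  obtain ⟨n, hn⟩ : ∃ n : ℕ, ENNReal.ofReal s < distribFn μ h (t₀ + 1 / (n + 1)) := by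
    have hU : {x | t₀ < h x} = ⋃ n : ℕ, {x | t₀ + 1 / ((n : ℝ) + 1) < h x} := by
      ext x
      simp only [Set.mem_setOf_eq, Set.mem_iUnion]
      constructor
      · intro hx
        obtain ⟨n, hn⟩ := exists_nat_one_div_lt (sub_pos.mpr hx)
        exact ⟨n, by linarith⟩
      · rintro ⟨n, hn⟩
        have hpos : 0 < 1 / ((n : ℝ) + 1) := by positivity
        linarith
    have hmono : Monotone (fun n : ℕ => {x | t₀ + 1 / ((n : ℝ) + 1) < h x}) := by
      intro a b hab
      apply Set.setOf_subset_setOf.mpr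
      intro x hx
      have hab' : (1 : ℝ) / (b + 1) ≤ 1 / (a + 1) := by
        apply one_div_le_one_div_of_le (by positivity)
        have : (a : ℝ) ≤ b := by exact_mod_cast hab
        linarith
      linarith
    have hdir := hmono.directed_le
    rw [distribFn, hU, hdir.measure_iUnion] at hlt
    exact lt_iSup_iff.mp hlt
  have hne : {t : ℝ | 0 ≤ t ∧ distribFn μ h t < ENNReal.ofReal s}.Nonempty := by
    obtain ⟨t, ht⟩ := exists_mem_S μ hm hs
    exact ⟨t, ht⟩
  have hlb : ∀ r ∈ {t : ℝ | 0 ≤ t ∧ distribFn μ h t < ENNReal.ofReal s},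
      t₀ + 1 / ((n : ℝ) + 1) ≤ r := by
    intro r hr
    by_contra hc
    push_neg at hc
    exact absurd (lt_of_lt_of_le hn (distribFn_antitone μ h hc.le)) (not_lt.mpr hr.2.le)
  have hpos : (0 : ℝ) < 1 / ((n : ℝ) + 1) := by positivity
  calc t₀ < t₀ + 1 / ((n : ℝ) + 1) := by linarith
    _ ≤ decRearr μ h s := le_csInf hne hlb

lemma decRearr_antitone_on [IsFiniteMeasure μ] {h : Ω → ℝ} (hm : Measurable h)
    {s₁ s₂ : ℝ} (hs₁ : 0 < s₁) (hs : s₁ ≤ s₂) : decRearr μ h s₂ ≤ decRearr μ h s₁ := by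
  apply csInf_le_csInf ⟨0, fun t ht => ht.1⟩ (exists_mem_S μ hm hs₁)
  intro t ht
  exact ⟨ht.1, lt_of_lt_of_le ht.2 (ENNReal.ofReal_le_ofReal hs)⟩

lemma decRearr_measurable [IsFiniteMeasure μ] {h : Ω → ℝ} (hm : Measurable h) :
    Measurable (decRearr μ h) := by
  apply measurable_of_Ioi
  intro t
  rcases lt_or_ge t 0 with htneg | ht
  · have : decRearr μ h ⁻¹' Set.Ioi t = Set.univ :=
      Set.eq_univ_of_forall fun s => lt_of_lt_of_le htneg (decRearr_nonneg μ h s)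
    rw [this]
    exact MeasurableSet.univ
  · apply Set.OrdConnected.measurableSet
    constructor
    intro a ha b hb c hc
    have ha' : t < decRearr μ h a := ha
    have hb' : t < decRearr μ h b := hb
    have ha0 : 0 < a := by
      by_contra h0
      push_neg at h0
      rw [decRearr_of_nonpos μ h h0] at ha'
      exact absurd ha' (not_lt.mpr ht)
    have hc0 : 0 < c := lt_of_lt_of_le ha0 hc.1
    exact lt_of_lt_of_le hb' (decRearr_antitone_on μ hm hc0 hc.2)

lemma layercake2 {α : Type*} [MeasurableSpace α] (ν : Measure α) [SFinite ν]
    {F G : α → ℝ} (hF : Measurable F) (hG : Measurable G)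
    (hF0 : ∀ x, 0 ≤ F x) (hG0 : ∀ x, 0 ≤ G x) :
    ∫⁻ x, ENNReal.ofReal (F x * G x) ∂ν =
      ∫⁻ p in Set.Ioi (0 : ℝ) ×ˢ Set.Ioi (0 : ℝ),
        ν {x | p.1 < F x ∧ p.2 < G x} ∂((volume : Measure ℝ).prod (volume : Measure ℝ)) := by
  set ρ := ((volume : Measure ℝ).prod (volume : Measure ℝ)).restrict (Set.Ioi 0 ×ˢ Set.Ioi 0) with hρ
  have hT : MeasurableSet {q : (ℝ × ℝ) × α | q.1.1 < F q.2 ∧ q.1.2 < G q.2} := by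
    apply MeasurableSet.inter
    · exact measurableSet_lt (measurable_fst.fst) (hF.comp measurable_snd)
    · exact measurableSet_lt (measurable_fst.snd) (hG.comp measurable_snd)
  have h1 : ∀ x, ENNReal.ofReal (F x * G x) = ρ {p : ℝ × ℝ | p.1 < F x ∧ p.2 < G x} := by
    intro x
    have hset : MeasurableSet {p : ℝ × ℝ | p.1 < F x ∧ p.2 < G x} := by
      have : {p : ℝ × ℝ | p.1 < F x ∧ p.2 < G x} = Set.Iio (F x) ×ˢ Set.Iio (G x) := by
        ext p
        simp [Set.mem_prod]
      rw [this]
      exact measurableSet_Iio.prod measurableSet_Iio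
    rw [hρ, Measure.restrict_apply hset]
    have heq : {p : ℝ × ℝ | p.1 < F x ∧ p.2 < G x} ∩ Set.Ioi 0 ×ˢ Set.Ioi 0
        = Set.Ioo 0 (F x) ×ˢ Set.Ioo 0 (G x) := by
      ext p
      simp only [Set.mem_inter_iff, Set.mem_setOf_eq, Set.mem_prod, Set.mem_Ioi, Set.mem_Ioo]
      tauto
    rw [heq, Measure.prod_prod, Real.volume_Ioo, Real.volume_Ioo, sub_zero, sub_zero,
      ENNReal.ofReal_mul (hF0 x)]
  calc ∫⁻ x, ENNReal.ofReal (F x * G x) ∂ν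
      = ∫⁻ x, ρ ((fun p => (p, x)) ⁻¹' {q : (ℝ × ℝ) × α | q.1.1 < F q.2 ∧ q.1.2 < G q.2}) ∂ν :=
        lintegral_congr fun x => h1 x
    _ = (ρ.prod ν) {q : (ℝ × ℝ) × α | q.1.1 < F q.2 ∧ q.1.2 < G q.2} :=
        (Measure.prod_apply_symm hT).symm
    _ = ∫⁻ p, ν (Prod.mk p ⁻¹' {q : (ℝ × ℝ) × α | q.1.1 < F q.2 ∧ q.1.2 < G q.2}) ∂ρ :=
        Measure.prod_apply hT
    _ = ∫⁻ p in Set.Ioi (0 : ℝ) ×ˢ Set.Ioi (0 : ℝ),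
          ν {x | p.1 < F x ∧ p.2 < G x} ∂((volume : Measure ℝ).prod (volume : Measure ℝ)) := rfl

lemma section_measure_le [IsFiniteMeasure μ] {f g : Ω → ℝ}
    (hfm : Measurable f) (hgm : Measurable g) (t u : ℝ) :
    μ {x | t < f x ∧ u < g x} ≤
      (volume.restrict (Set.Ioo (0 : ℝ) (μ Set.univ).toReal))
        {s | t < decRearr μ f s ∧ u < decRearr μ g s} := by
  set c := μ {x | t < f x ∧ u < g x} with hc
  have hc1 : c ≤ distribFn μ f t := measure_mono fun x hx => hx.1
  have hc2 : c ≤ distribFn μ g u := measure_mono fun x hx => hx.2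
  have hcfin : c ≠ ⊤ := measure_ne_top μ _
  have hM : c.toReal ≤ (μ Set.univ).toReal :=
    ENNReal.toReal_mono (measure_ne_top μ _) (measure_mono (Set.subset_univ _))
  have hsub : Set.Ioo (0 : ℝ) c.toReal ⊆ {s | t < decRearr μ f s ∧ u < decRearr μ g s} := by
    intro s hs
    have h1 : ENNReal.ofReal s < c := by
      rw [← ENNReal.ofReal_toReal hcfin]
      exact (ENNReal.ofReal_lt_ofReal_iff_of_nonneg hs.1.le).mpr hs.2
    exact ⟨lt_decRearr μ hfm hs.1 (h1.trans_le hc1),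
      lt_decRearr μ hgm hs.1 (h1.trans_le hc2)⟩
  have hkey : c = (volume.restrict (Set.Ioo (0 : ℝ) (μ Set.univ).toReal))
      (Set.Ioo (0 : ℝ) c.toReal) := by
    rw [Measure.restrict_apply' measurableSet_Ioo]
    have : Set.Ioo (0 : ℝ) c.toReal ∩ Set.Ioo (0 : ℝ) (μ Set.univ).toReal
        = Set.Ioo (0 : ℝ) c.toReal :=
      Set.inter_eq_self_of_subset_left (Set.Ioo_subset_Ioo le_rfl hM)
    rw [this, Real.volume_Ioo, sub_zero, ENNReal.ofReal_toReal hcfin]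
  rw [hkey]
  exact measure_mono hsub

end Aux

/-- The Hardy–Littlewood inequality:
`∫_Ω f g ≤ ∫_0^{|Ω|} f*(s) g*(s) ds`. -/
theorem hardy_littlewood {Ω : Type*} [MeasurableSpace Ω] (μ : Measure Ω)
    [IsFiniteMeasure μ] (f g : Ω → ℝ) (hf0 : ∀ x, 0 ≤ f x) (hg0 : ∀ x, 0 ≤ g x)
    (hfm : Measurable f) (hgm : Measurable g) :
    ∫⁻ x, ENNReal.ofReal (f x * g x) ∂μ ≤
      ∫⁻ s in Set.Ioo (0:ℝ) (μ Set.univ).toReal,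
        ENNReal.ofReal (decRearr μ f s * decRearr μ g s) := by
  rw [layercake2 μ hfm hgm hf0 hg0,
    layercake2 (volume.restrict (Set.Ioo (0 : ℝ) (μ Set.univ).toReal))
      (decRearr_measurable μ hfm) (decRearr_measurable μ hgm)
      (fun s => decRearr_nonneg μ f s) (fun s => decRearr_nonneg μ g s)]
  refine lintegral_mono_ae ?_
  filter_upwards [ae_restrict_mem (measurableSet_Ioi.prod measurableSet_Ioi)] with p _
  exact section_measure_le μ hfm hgm p.1 p.2
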